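/- Let V be a finite-dimensional complex inner product space and let P and Q be orthogonal projections on V. Then V admits an orthogonal direct-sum decomposition V = ⊕_α V_α into subspaces V_α with dim V_α ≤ 2, each of which is invariant under both P and Q. (Jordan's two-projections lemma, underlying the qubitization structure of the echo operator.) -/

import Mathlib

open Module

section JordanAux
open Module

/-- Step: on a nontrivial space, there is a nonzero subspace of dim ≤ 2
invariant under both projections. -/
theorem jordan_step
    (V : Type*) [NormedAddCommGroup V] [InnerProductSpace ℂ V]
    [FiniteDimensional ℂ V] [Nontrivial V]
    (P Q : V →ₗ[ℂ] V)
    (hP2 : P ∘ₗ P = P) (hQ2 : Q ∘ₗ Q = Q) :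
    ∃ W : Submodule ℂ V, W ≠ ⊥ ∧ finrank ℂ W ≤ 2 ∧
      (∀ x ∈ W, P x ∈ W) ∧ (∀ x ∈ W, Q x ∈ W) := by
  by_cases hP : LinearMap.range P = ⊥
  · -- P = 0; take an eigenvector of Q
    have hP0 : P = 0 := LinearMap.range_eq_bot.mp hP
    obtain ⟨μ, hμ⟩ := Module.End.exists_eigenvalue Q
    obtain ⟨v, hv⟩ := hμ.exists_hasEigenvector
    refine ⟨Submodule.span ℂ {v}, ?_, ?_, ?_, ?_⟩
    · simp [Submodule.span_singleton_eq_bot, hv.2]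
    · rw [finrank_span_singleton hv.2]; omega
    · intro x hx; simp [hP0]
    · intro x hx
      obtain ⟨c, rfl⟩ := Submodule.mem_span_singleton.mp hx
      rw [map_smul, hv.apply_eq_smul]
      exact Submodule.smul_mem _ _ (Submodule.smul_mem _ _ (Submodule.mem_span_singleton_self v))
  · -- range P nontrivial; take eigenvector of (P ∘ Q) restricted to range P
    have hmaps : ∀ x ∈ LinearMap.range P, (P ∘ₗ Q) x ∈ LinearMap.range P := by
      intro x _; exact ⟨Q x, rfl⟩
    set f : Module.End ℂ (LinearMap.range P) := (P ∘ₗ Q).restrict hmaps with hf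
    have : Nontrivial (LinearMap.range P) := Submodule.nontrivial_iff_ne_bot.mpr hP
    obtain ⟨μ, hμ⟩ := Module.End.exists_eigenvalue f
    obtain ⟨v, hv⟩ := hμ.exists_hasEigenvector
    have hvne : (v : V) ≠ 0 := fun h => hv.2 (Subtype.ext h)
    have hPv : P (v : V) = (v : V) := by
      obtain ⟨u, hu⟩ := v.2
      have := congrArg P hu
      rw [← LinearMap.comp_apply, hP2] at this
      rw [← hu] at this ⊢
      exact this.symm
    have hPQv : P (Q (v : V)) = μ • (v : V) := by
      have := congrArg Subtype.val (hv.apply_eq_smul)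
      simpa [f, LinearMap.restrict_apply] using this
    refine ⟨Submodule.span ℂ {(v : V), Q v}, ?_, ?_, ?_, ?_⟩
    · intro h
      apply hvne
      have : (v : V) ∈ Submodule.span ℂ {(v : V), Q v} :=
        Submodule.subset_span (by simp)
      simpa [h] using this
    · classical
      have hset : ({(v : V), Q v} : Set V) = (({(v : V), Q v} : Finset V) : Set V) := by simp
      rw [hset]
      have h := finrank_span_finset_le_card (R := ℂ) ({(v : V), Q v} : Finset V)
      refine h.trans ?_
      exact (Finset.card_insert_le _ _).trans (by simp)
    · intro x hx
      have hle : Submodule.span ℂ {(v : V), Q v} ≤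
          Submodule.comap P (Submodule.span ℂ {(v : V), Q v}) := by
        rw [Submodule.span_le]
        rintro y (rfl | rfl)
        · simp only [Submodule.mem_comap, hPv, SetLike.mem_coe]
          exact Submodule.subset_span (by simp)
        · simp only [Submodule.mem_comap, hPQv, SetLike.mem_coe]
          exact Submodule.smul_mem _ _ (Submodule.subset_span (by simp))
      exact hle hx
    · intro x hx
      have hle : Submodule.span ℂ {(v : V), Q v} ≤
          Submodule.comap Q (Submodule.span ℂ {(v : V), Q v}) := by
        rw [Submodule.span_le]
        rintro y (rfl | rfl)
        · exact Submodule.subset_span (by simp)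
        · have : Q (Q (v : V)) = Q (v : V) := by rw [← LinearMap.comp_apply, hQ2]
          simp only [Submodule.mem_comap, this, SetLike.mem_coe]
          exact Submodule.subset_span (by simp)
      exact hle hx


universe u

theorem jordan_aux (n : ℕ) :
    ∀ (V : Type u) [NormedAddCommGroup V] [InnerProductSpace ℂ V]
      [FiniteDimensional ℂ V], finrank ℂ V = n →
    ∀ (P Q : V →ₗ[ℂ] V),
    P ∘ₗ P = P → Q ∘ₗ Q = Q →
    (∀ x y : V, inner ℂ (P x) y = (inner ℂ x (P y) : ℂ)) →
    (∀ x y : V, inner ℂ (Q x) y = (inner ℂ x (Q y) : ℂ)) →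
    ∃ (ι : Type) (_ : Fintype ι) (_ : DecidableEq ι) (W : ι → Submodule ℂ V),
      DirectSum.IsInternal W ∧
      (∀ a b : ι, a ≠ b → ∀ x ∈ W a, ∀ y ∈ W b, (inner ℂ x y : ℂ) = 0) ∧
      (∀ a : ι, Module.finrank ℂ (W a) ≤ 2) ∧
      (∀ a : ι, ∀ x ∈ W a, P x ∈ W a ∧ Q x ∈ W a) := by
  induction n using Nat.strong_induction_on with
  | _ n ih =>
  intro V _ _ _ hn P Q hP2 hQ2 hPsa hQsa
  rcases Nat.eq_zero_or_pos n with h0 | hpos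
  · -- trivial space
    subst h0
    have hsub : Subsingleton V := by
      rw [← Module.finrank_zero_iff (R := ℂ)]; omega
    refine ⟨Empty, inferInstance, inferInstance, fun a => a.elim, ?_, ?_, ?_, ?_⟩
    · rw [DirectSum.isInternal_submodule_iff_iSupIndep_and_iSup_eq_top]
      constructor
      · intro a; exact a.elim
      · rw [eq_top_iff]; intro x _
        have : x = 0 := Subsingleton.elim x 0
        simp [this]
    · intro a; exact a.elim
    · intro a; exact a.elim
    · intro a; exact a.elim
  · have hnt : Nontrivial V := by
      apply Module.nontrivial_of_finrank_pos (R := ℂ)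
      omega
    obtain ⟨W, hWne, hWdim, hWP, hWQ⟩ := jordan_step V P Q hP2 hQ2
    -- orthogonal complement is invariant
    have hPW : ∀ x ∈ Wᗮ, P x ∈ Wᗮ := by
      intro x hx
      intro u hu
      rw [← hPsa u x]
      exact hx (P u) (hWP u hu)
    have hQW : ∀ x ∈ Wᗮ, Q x ∈ Wᗮ := by
      intro x hx u hu
      rw [← hQsa u x]
      exact hx (Q u) (hWQ u hu)
    set P' : (Wᗮ : Submodule ℂ V) →ₗ[ℂ] Wᗮ := P.restrict hPW with hP'
    set Q' : (Wᗮ : Submodule ℂ V) →ₗ[ℂ] Wᗮ := Q.restrict hQW with hQ'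
    have hdimlt : finrank ℂ Wᗮ < n := by
      have hsum := Submodule.finrank_add_finrank_orthogonal W
      have hWpos : 0 < finrank ℂ W := by
        rw [← Submodule.one_le_finrank_iff] at hWne
        omega
      omega
    obtain ⟨ι', i1, i2, W', hInt, hOrth, hDim, hInv⟩ :=
      ih (finrank ℂ Wᗮ) hdimlt Wᗮ rfl P' Q'
        (by
          ext x
          simp only [LinearMap.comp_apply, P', LinearMap.restrict_apply, Submodule.coe_subtype]
          rw [← LinearMap.comp_apply, hP2])
        (by
          ext x
          simp only [LinearMap.comp_apply, Q', LinearMap.restrict_apply, Submodule.coe_subtype]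
          rw [← LinearMap.comp_apply, hQ2])
        (fun x y => by
          simpa [P', Submodule.coe_inner, LinearMap.restrict_apply] using hPsa x y)
        (fun x y => by
          simpa [Q', Submodule.coe_inner, LinearMap.restrict_apply] using hQsa x y)
    classical
    set WW : Option ι' → Submodule ℂ V :=
      fun o => Option.elim o W (fun a => (W' a).map Wᗮ.subtype) with hWW
    have hMapLe : ∀ a : ι', (W' a).map Wᗮ.subtype ≤ Wᗮ := by
      intro a
      rintro x ⟨y, _, rfl⟩
      exact y.2
    have hOrthAll : ∀ a b : Option ι', a ≠ b →
        ∀ x ∈ WW a, ∀ y ∈ WW b, (inner ℂ x y : ℂ) = 0 := by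
      rintro (_ | a) (_ | b) hab x hx y hy
      · exact absurd rfl hab
      · exact (Submodule.mem_orthogonal _ _).mp (hMapLe b hy) x hx
      · rw [← inner_conj_symm]
        rw [(Submodule.mem_orthogonal _ _).mp (hMapLe a hx) y hy]
        simp
      · obtain ⟨x', hx', rfl⟩ := hx
        obtain ⟨y', hy', rfl⟩ := hy
        have := hOrth a b (fun h => hab (by rw [h])) x' hx' y' hy'
        rw [Submodule.coe_inner] at this
        exact this
    refine ⟨Option ι', inferInstance, inferInstance, WW, ?_, hOrthAll, ?_, ?_⟩
    · rw [DirectSum.isInternal_submodule_iff_iSupIndep_and_iSup_eq_top]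
      constructor
      · exact (orthogonalFamily_iff_pairwise.mpr
          (fun a b hab => Submodule.isOrtho_iff_inner_eq.mpr (hOrthAll a b hab))).independent
      · rw [iSup_option]
        have h1 : (⨆ a : ι', WW (some a)) = Wᗮ := by
          simp only [WW, Option.elim]
          rw [← Submodule.map_iSup, hInt.submodule_iSup_eq_top, Submodule.map_top,
            Submodule.range_subtype]
        rw [h1]
        exact Submodule.sup_orthogonal_of_hasOrthogonalProjection
    · rintro (_ | a)
      · exact hWdim
      · show finrank ℂ ((W' a).map Wᗮ.subtype) ≤ 2
        rw [Submodule.finrank_map_subtype_eq]; exact hDim a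
    · rintro (_ | a) x hx
      · exact ⟨hWP x hx, hWQ x hx⟩
      · obtain ⟨y, hy, rfl⟩ := hx
        exact ⟨⟨P' y, (hInv a y hy).1, rfl⟩, ⟨Q' y, (hInv a y hy).2, rfl⟩⟩

end JordanAux

/-- **Jordan's two-projections lemma.** If `P` and `Q` are orthogonal projections
(self-adjoint idempotents) on a finite-dimensional complex inner product space `V`,
then `V` admits an orthogonal direct-sum decomposition into subspaces of dimension
at most `2`, each invariant under both `P` and `Q`. -/
theorem jordan_two_projections
    (V : Type*) [NormedAddCommGroup V] [InnerProductSpace ℂ V]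
    [FiniteDimensional ℂ V]
    (P Q : V →ₗ[ℂ] V)
    (hP2 : P ∘ₗ P = P) (hQ2 : Q ∘ₗ Q = Q)
    (hPsa : ∀ x y : V, inner ℂ (P x) y = (inner ℂ x (P y) : ℂ))
    (hQsa : ∀ x y : V, inner ℂ (Q x) y = (inner ℂ x (Q y) : ℂ)) :
    ∃ (ι : Type) (_ : Fintype ι) (_ : DecidableEq ι) (W : ι → Submodule ℂ V),
      DirectSum.IsInternal W ∧
      (∀ a b : ι, a ≠ b → ∀ x ∈ W a, ∀ y ∈ W b, (inner ℂ x y : ℂ) = 0) ∧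
      (∀ a : ι, Module.finrank ℂ (W a) ≤ 2) ∧
      (∀ a : ι, ∀ x ∈ W a, P x ∈ W a ∧ Q x ∈ W a) := by
  exact jordan_aux (finrank ℂ V) V rfl P Q hP2 hQ2 hPsa hQsa
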